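/- Margin-based fast-rate bound (core inequality in Theorem 6.5): Fix h. Suppose (i) the soft margin: P_{s∼d^{π*}_h}(0 < |Q*_h(s,π*(s)) - Q*_h(s,a)| < α) ≤ (α/α₀)^β for all a and α > 0; (ii) the advantage estimation error: E_{s∼d^{π*}_h}[Σ_{a∈A} |A*_h(s,π*(s)) - A*_h(s,a) - Â_h(s,π*(s)) + Â_h(s,a)|²] ≤ ε². Then for every α > 0, E_{s∼d^{π*}_h}[Σ_{a∈A} 1{Â_h(s,a) ≥ Â_h(s,π*(s))}·1{Q*_h(s,a) < Q*_h(s,π*(s))}] ≤ |A|(α/α₀)^β + ε²/α². -/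
import Mathlib


/-- Margin-based fast-rate bound: under the soft margin condition and an advantage
estimation-error bound, the probability mass of misranked strictly suboptimal actions is
at most `|A|·(α/α₀)^β + ε²/α²` for every `α > 0`. -/
theorem stmt_17 {S A : Type*} [Fintype S] [Fintype A]
    (d : S → ℝ) (hd0 : ∀ s, 0 ≤ d s) (hd1 : ∑ s : S, d s = 1)
    (πstar : S → A) (Qstar Astar Ahat : S → A → ℝ)
    (hA : ∀ s a, Astar s a = Qstar s a - Qstar s (πstar s))
    (α₀ β : ℝ) (hα₀ : 0 < α₀) (hβ : 0 < β)
    (hmargin : ∀ (a : A) (α : ℝ), 0 < α →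
      (∑ s : S, if 0 < |Qstar s (πstar s) - Qstar s a| ∧
          |Qstar s (πstar s) - Qstar s a| < α then d s else 0) ≤ (α / α₀) ^ β)
    (ε : ℝ)
    (hest : (∑ s : S, d s * ∑ a : A,
        (Astar s (πstar s) - Astar s a - Ahat s (πstar s) + Ahat s a) ^ 2) ≤ ε ^ 2) :
    ∀ α : ℝ, 0 < α →
      (∑ s : S, d s * ∑ a : A,
          (if Ahat s (πstar s) ≤ Ahat s a then (1 : ℝ) else 0) *
            (if Qstar s a < Qstar s (πstar s) then (1 : ℝ) else 0)) ≤
        (Fintype.card A : ℝ) * (α / α₀) ^ β + ε ^ 2 / α ^ 2 := by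
  intro α hα
  have hα2 : (0:ℝ) < α ^ 2 := by positivity
  have key : ∀ s a, d s * ((if Ahat s (πstar s) ≤ Ahat s a then (1:ℝ) else 0) *
      (if Qstar s a < Qstar s (πstar s) then (1:ℝ) else 0)) ≤
      (if 0 < |Qstar s (πstar s) - Qstar s a| ∧ |Qstar s (πstar s) - Qstar s a| < α
        then d s else 0)
      + d s * (Astar s (πstar s) - Astar s a - Ahat s (πstar s) + Ahat s a) ^ 2 / α ^ 2 := by
    intro s a
    have hds := hd0 s
    have hnn : 0 ≤ d s * (Astar s (πstar s) - Astar s a - Ahat s (πstar s) + Ahat s a) ^ 2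
        / α ^ 2 := by positivity
    by_cases h1 : Ahat s (πstar s) ≤ Ahat s a
    · by_cases h2 : Qstar s a < Qstar s (πstar s)
      · simp only [if_pos h1, if_pos h2, mul_one]
        have hgpos : 0 < Qstar s (πstar s) - Qstar s a := by linarith
        by_cases h3 : |Qstar s (πstar s) - Qstar s a| < α
        · rw [if_pos ⟨by rwa [abs_of_pos hgpos], h3⟩]
          linarith
        · rw [if_neg (by tauto)]
          rw [abs_of_pos hgpos] at h3
          push_neg at h3
          have hX : α ≤ Astar s (πstar s) - Astar s a - Ahat s (πstar s) + Ahat s a := by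
            rw [hA, hA]; linarith
          have hsq : α ^ 2 ≤ (Astar s (πstar s) - Astar s a - Ahat s (πstar s) + Ahat s a) ^ 2 := by
            nlinarith
          have h1le : (1:ℝ) ≤ (Astar s (πstar s) - Astar s a - Ahat s (πstar s) + Ahat s a) ^ 2
              / α ^ 2 := (one_le_div hα2).mpr hsq
          calc d s = d s * 1 := (mul_one _).symm
            _ ≤ d s * ((Astar s (πstar s) - Astar s a - Ahat s (πstar s) + Ahat s a) ^ 2 / α ^ 2) :=
                mul_le_mul_of_nonneg_left h1le hds
            _ = d s * (Astar s (πstar s) - Astar s a - Ahat s (πstar s) + Ahat s a) ^ 2 / α ^ 2 := by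
                ring
            _ ≤ _ := by
                rw [zero_add]
      · simp only [if_neg h2, mul_zero, zero_mul]
        positivity
    · simp only [if_neg h1, zero_mul, mul_zero]
      positivity
  calc (∑ s : S, d s * ∑ a : A,
          (if Ahat s (πstar s) ≤ Ahat s a then (1 : ℝ) else 0) *
            (if Qstar s a < Qstar s (πstar s) then (1 : ℝ) else 0))
      = ∑ s : S, ∑ a : A, d s * ((if Ahat s (πstar s) ≤ Ahat s a then (1 : ℝ) else 0) *
            (if Qstar s a < Qstar s (πstar s) then (1 : ℝ) else 0)) := by
        simp [Finset.mul_sum]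
    _ ≤ ∑ s : S, ∑ a : A,
          ((if 0 < |Qstar s (πstar s) - Qstar s a| ∧ |Qstar s (πstar s) - Qstar s a| < α
              then d s else 0)
            + d s * (Astar s (πstar s) - Astar s a - Ahat s (πstar s) + Ahat s a) ^ 2 / α ^ 2) := by
        apply Finset.sum_le_sum; intro s _
        exact Finset.sum_le_sum fun a _ => key s a
    _ = (∑ a : A, ∑ s : S,
          (if 0 < |Qstar s (πstar s) - Qstar s a| ∧ |Qstar s (πstar s) - Qstar s a| < α
              then d s else 0))
        + (∑ s : S, d s * ∑ a : A,
            (Astar s (πstar s) - Astar s a - Ahat s (πstar s) + Ahat s a) ^ 2) / α ^ 2 := by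
        simp only [Finset.sum_add_distrib]
        congr 1
        · rw [Finset.sum_comm]
        · simp [Finset.mul_sum, Finset.sum_div, mul_div_assoc]
    _ ≤ (∑ _a : A, (α / α₀) ^ β) + ε ^ 2 / α ^ 2 := by
        gcongr with a _
        exact hmargin a α hα
    _ = (Fintype.card A : ℝ) * (α / α₀) ^ β + ε ^ 2 / α ^ 2 := by
        rw [Finset.sum_const, nsmul_eq_mul, Finset.card_univ]
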